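/- For a null-terminated string S and index i ∈ [1, n), the set P_i = { j ∈ [0, i) : nss[j] = i } is empty if and only if S_{i-1} ≺ S_i; moreover if P_i is non-empty then i-1 ∈ P_i. -/
import Mathlib


/-- Strict lexicographic order on strings over a totally ordered alphabet. -/
def Slt {α : Type*} [LinearOrder α] (u v : List α) : Prop := List.Lex (· < ·) u v

/-- `S` is null-terminated: its last character is strictly smaller than every other character. -/
def NullTerminated {α : Type*} [LinearOrder α] (S : List α) : Prop :=
  ∀ i, ∀ _h : i + 1 < S.length, S[S.length - 1]'(by omega) < S[i]'(by omega)

/-- `nss S i` : position of the next smaller suffix of `i` (with `S.drop S.length = ε`). -/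
noncomputable def nss {α : Type*} [LinearOrder α] (S : List α) (i : ℕ) : ℕ :=
  sInf { j | i < j ∧ j ≤ S.length ∧ Slt (S.drop j) (S.drop i) }

/-- `pss S i` : position of the previous smaller suffix of `i`, or `-1` if none exists. -/
noncomputable def pss {α : Type*} [LinearOrder α] (S : List α) (i : ℕ) : ℤ :=
  sSup (insert (-1) { j : ℤ | 0 ≤ j ∧ j < (i : ℤ) ∧ Slt (S.drop j.toNat) (S.drop i) })

/-- A non-empty string is a Lyndon word iff it is smaller than all of its proper suffixes. -/
def IsLyndon {α : Type*} [LinearOrder α] (w : List α) : Prop :=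
  w ≠ [] ∧ ∀ j, 0 < j → j < w.length → Slt w (w.drop j)

/-- `Ls S i` : the Lyndon prefix of the suffix `S.drop i`, which equals `S[i..nss[i])`. -/
noncomputable def Ls {α : Type*} [LinearOrder α] (S : List α) (i : ℕ) : List α :=
  (S.drop i).take (nss S i - i)

lemma slt_iff_lt {α : Type*} [LinearOrder α] (u v : List α) : Slt u v ↔ u < v := Iff.rfl

lemma nss_spec {α : Type*} [LinearOrder α] (S : List α) {j : ℕ} (hj : j < S.length) :
    j < nss S j ∧ nss S j ≤ S.length ∧ Slt (S.drop (nss S j)) (S.drop j) := by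
  have hmem : S.length ∈ {k | j < k ∧ k ≤ S.length ∧ Slt (S.drop k) (S.drop j)} := by
    refine ⟨hj, le_refl _, ?_⟩
    rw [List.drop_length]
    rcases h : S.drop j with _ | ⟨a, t⟩
    · exfalso
      have := congrArg List.length h
      simp at this; omega
    · exact List.Lex.nil
  exact Nat.sInf_mem ⟨_, hmem⟩

theorem stmt5 {α : Type*} [LinearOrder α] (S : List α) (hS : NullTerminated S)
    {i : ℕ} (h1 : 1 ≤ i) (h2 : i < S.length) :
    ({j | j < i ∧ nss S j = i} = ∅ ↔ Slt (S.drop (i - 1)) (S.drop i)) ∧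
      ({j | j < i ∧ nss S j = i}.Nonempty → i - 1 ∈ {j | j < i ∧ nss S j = i}) := by
  have hne : S.drop (i - 1) ≠ S.drop i := by
    intro h
    have := congrArg List.length h
    simp at this; omega
  -- if Slt (drop (i-1)) (drop i), then P_i is empty
  have empty_of : Slt (S.drop (i - 1)) (S.drop i) → {j | j < i ∧ nss S j = i} = ∅ := by
    intro hlt
    ext j
    simp only [Set.mem_setOf_eq, Set.mem_empty_iff_false, iff_false, not_and]
    intro hji hnss
    rcases lt_or_eq_of_le (Nat.le_sub_one_of_lt hji) with hj | hj
    · -- j < i - 1 : then i - 1 is in the nss set for j, contradicting sInf = i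
      have hdrop : Slt (S.drop i) (S.drop j) := by
        have h' := nss_spec S (lt_trans hji h2)
        rw [hnss] at h'
        exact h'.2.2
      have hmem : (i - 1) ∈ {k | j < k ∧ k ≤ S.length ∧ Slt (S.drop k) (S.drop j)} := by
        refine ⟨hj, by omega, ?_⟩
        rw [slt_iff_lt] at *
        exact lt_trans hlt hdrop
      have := Nat.sInf_le hmem
      rw [nss] at hnss
      omega
    · -- j = i - 1 : contradiction with asymmetry
      have hdrop : Slt (S.drop i) (S.drop (i - 1)) := by
        have := nss_spec S (lt_trans hji h2)
        rw [hnss] at this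
        rw [hj] at this
        exact this.2.2
      rw [slt_iff_lt] at hlt hdrop
      exact absurd (lt_trans hlt hdrop) (lt_irrefl _)
  -- if ¬ Slt (drop (i-1)) (drop i), then nss (i-1) = i, so i-1 ∈ P_i
  have mem_of : ¬ Slt (S.drop (i - 1)) (S.drop i) → i - 1 ∈ {j | j < i ∧ nss S j = i} := by
    intro hnlt
    have hlt : Slt (S.drop i) (S.drop (i - 1)) := by
      rw [slt_iff_lt] at *
      rcases lt_trichotomy (S.drop (i - 1)) (S.drop i) with h | h | h
      · exact absurd h hnlt
      · exact absurd h hne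
      · exact h
    refine ⟨by omega, ?_⟩
    have hmem : i ∈ {k | i - 1 < k ∧ k ≤ S.length ∧ Slt (S.drop k) (S.drop (i - 1))} :=
      ⟨by omega, by omega, hlt⟩
    have hle : nss S (i - 1) ≤ i := Nat.sInf_le hmem
    have hgt : i - 1 < nss S (i - 1) := (nss_spec S (by omega)).1
    omega
  constructor
  · constructor
    · intro hempty
      by_contra hnlt
      have := mem_of hnlt
      rw [hempty] at this
      exact this
    · exact empty_of
  · intro ⟨j, hj⟩
    apply mem_of
    intro hlt
    rw [empty_of hlt] at hj
    exact hj
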